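/- Let X be a nonempty finite-dimensional Noetherian topological space that is equidimensional and catenary, and such that every irreducible component of X is equicodimensional. Then X is biequidimensional, i.e., every maximal chain of irreducible closed subsets of X has length dim X. -/

import Mathlib

open Order TopologicalSpace

section AuxFD

variable {β : Type*} [Preorder β]

lemma my_fdo [Nonempty β] (h : Order.krullDim β < ⊤) : FiniteDimensionalOrder β := by
  rw [Order.krullDim_eq_iSup_length] at h
  have h' : (⨆ p : LTSeries β, (p.length : ℕ∞)) ≠ ⊤ := by
    intro e
    rw [e] at h
    simp at h
  have : Nonempty (Set.range fun p : LTSeries β => (p.length : ℕ∞)) :=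
    ⟨_, Set.mem_range_self (RelSeries.singleton _ (Classical.arbitrary β))⟩
  obtain ⟨p, hp⟩ := ENat.sSup_mem_of_nonempty_of_lt_top
    (s := Set.range fun p : LTSeries β => (p.length : ℕ∞))
    (by rw [← lt_top_iff_ne_top, iSup] at h'; exact h')
  refine ⟨⟨p, fun q => ?_⟩⟩
  have hp' : (p.length : ℕ∞) = sSup (Set.range fun p : LTSeries β => (p.length : ℕ∞)) := hp
  have : (q.length : ℕ∞) ≤ (p.length : ℕ∞) := by
    rw [hp']; exact le_sSup ⟨q, rfl⟩
  exact_mod_cast this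

lemma my_le_krullDim_of_mem (s : Set β) (p : LTSeries β) (h : ∀ i, p.toFun i ∈ s) :
    (p.length : WithBot ℕ∞) ≤ Order.krullDim s := by
  have := LTSeries.length_le_krullDim (α := s)
    (LTSeries.mk p.length (fun i => (⟨p.toFun i, h i⟩ : s))
      (fun i j hij => Subtype.mk_lt_mk.mpr (p.strictMono hij)))
  exact this

end AuxFD

section AuxLongest

variable {β : Type*} [PartialOrder β] [FiniteDimensionalOrder β]

lemma my_longest_head_isMin : IsMin (LTSeries.longestOf β).head := by
  by_contra h
  obtain ⟨x, hx⟩ := not_isMin_iff.mp h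
  have := LTSeries.longestOf_is_longest ((LTSeries.longestOf β).cons x hx)
  simp at this

lemma my_longest_last_isMax : IsMax (LTSeries.longestOf β).last := by
  by_contra h
  obtain ⟨x, hx⟩ := not_isMax_iff.mp h
  have := LTSeries.longestOf_is_longest ((LTSeries.longestOf β).snoc x hx)
  simp at this

lemma my_longest_covBy (i : Fin (LTSeries.longestOf β).length) :
    (LTSeries.longestOf β).toFun i.castSucc ⋖ (LTSeries.longestOf β).toFun i.succ := by
  by_contra h
  obtain ⟨c, hc1, hc2⟩ := (not_covBy_iff ((LTSeries.longestOf β).step i)).mp h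
  have := LTSeries.longestOf_is_longest ((LTSeries.longestOf β).insertNth i c hc1 hc2)
  simp [RelSeries.insertNth] at this

end AuxLongest

section AuxTransfer

variable {β : Type*} [PartialOrder β]

lemma my_covBy_Icc {Y T : β} {a b : Set.Icc Y T} (h : a ⋖ b) : a.1 ⋖ b.1 := by
  unfold CovBy at h ⊢
  refine ⟨h.1, fun c hc1 hc2 => ?_⟩
  exact h.2 (c := ⟨c, ⟨a.2.1.trans hc1.le, hc2.le.trans b.2.2⟩⟩) hc1 hc2

lemma my_isMin_Iic {T : β} {z : Set.Iic T} (h : IsMin z) : IsMin z.1 := by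
  intro c hc
  exact h (b := ⟨c, hc.trans z.2⟩) hc

end AuxTransfer

/-- A maximal chain of irreducible closed subsets. -/
def IsMaximalChain {α : Type*} [PartialOrder α] (p : LTSeries α) : Prop :=
  IsMin p.head ∧ IsMax p.last ∧ ∀ i : Fin p.length, p.toFun i.castSucc ⋖ p.toFun i.succ

/-- Let `X` be a nonempty finite-dimensional Noetherian topological space that is
equidimensional (all irreducible components have the same dimension), catenary (all saturated
chains between two fixed irreducible closed subsets have the same length), and such that every
irreducible component of `X` is equicodimensional (all minimal irreducible closed subsets
contained in it have the same codimension in it).  Then `X` is biequidimensional: every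
maximal chain of irreducible closed subsets of `X` has length `dim X`. -/
theorem stmt_3 (X : Type*) [TopologicalSpace X] [NoetherianSpace X] [Nonempty X]
    (hfd : topologicalKrullDim X < ⊤)
    (hequidim : ∀ Z Z' : IrreducibleCloseds X, IsMax Z → IsMax Z' →
      Order.krullDim (Set.Iic Z) = Order.krullDim (Set.Iic Z'))
    (hcat : ∀ p q : RelSeries {x : IrreducibleCloseds X × IrreducibleCloseds X | x.1 ⋖ x.2},
      p.head = q.head → p.last = q.last → p.length = q.length)
    (hcompeqcodim : ∀ T : IrreducibleCloseds X, IsMax T →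
      ∀ Y Y' : IrreducibleCloseds X, IsMin Y → IsMin Y' → Y ≤ T → Y' ≤ T →
        Order.krullDim (Set.Icc Y T) = Order.krullDim (Set.Icc Y' T)) :
    ∀ p : LTSeries (IrreducibleCloseds X), IsMaximalChain p →
      (p.length : WithBot ℕ∞) = topologicalKrullDim X := by
  haveI : Nonempty (IrreducibleCloseds X) :=
    ⟨⟨closure {Classical.arbitrary X}, isIrreducible_singleton.closure, isClosed_closure⟩⟩
  have hfd' : Order.krullDim (IrreducibleCloseds X) < ⊤ := hfd
  haveI := my_fdo hfd'
  -- Claim A: length of a maximal chain equals the Krull dimension of [head, last]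
  have keyA : ∀ p : LTSeries (IrreducibleCloseds X), IsMaximalChain p →
      (p.length : WithBot ℕ∞) = Order.krullDim (Set.Icc p.head p.last) := by
    rintro p ⟨hmin, hmax, hcov⟩
    have hYT : p.head ≤ p.last := p.head_le_last
    haveI : Nonempty (Set.Icc p.head p.last) := ⟨⟨p.head, le_refl _, hYT⟩⟩
    haveI : FiniteDimensionalOrder (Set.Icc p.head p.last) :=
      my_fdo (lt_of_le_of_lt
        (Order.krullDim_le_of_strictMono Subtype.val (fun _ _ h => h)) hfd')
    set r := LTSeries.longestOf (Set.Icc p.head p.last) with hrdef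
    have hrh : (r.head : IrreducibleCloseds X) = p.head := by
      have h1 : (⟨p.head, le_refl _, hYT⟩ : Set.Icc p.head p.last) ≤ r.head := r.head.2.1
      exact le_antisymm (my_longest_head_isMin h1) r.head.2.1
    have hrl : (r.last : IrreducibleCloseds X) = p.last := by
      have h1 : r.last ≤ (⟨p.last, hYT, le_refl _⟩ : Set.Icc p.head p.last) := r.last.2.2
      exact le_antisymm r.last.2.2 (my_longest_last_isMax h1)
    let rc : RelSeries {x : IrreducibleCloseds X × IrreducibleCloseds X | x.1 ⋖ x.2} :=
      ⟨r.length, fun i => (r.toFun i).1, fun i => my_covBy_Icc (my_longest_covBy i)⟩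
    let pc : RelSeries {x : IrreducibleCloseds X × IrreducibleCloseds X | x.1 ⋖ x.2} :=
      ⟨p.length, p.toFun, hcov⟩
    have hlen : pc.length = rc.length := hcat pc rc hrh.symm hrl.symm
    rw [Order.krullDim_eq_length_of_finiteDimensionalOrder (α := Set.Icc p.head p.last)]
    exact_mod_cast hlen
  -- Claim B: krullDim (Iic T) = krullDim (Icc Y T) for T maximal, Y minimal, Y ≤ T
  have keyB : ∀ T : IrreducibleCloseds X, IsMax T → ∀ Y : IrreducibleCloseds X, IsMin Y →
      Y ≤ T → Order.krullDim (Set.Iic T) = Order.krullDim (Set.Icc Y T) := by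
    intro T hT Y hY hYT
    haveI : Nonempty (Set.Iic T) := ⟨⟨T, Set.self_mem_Iic⟩⟩
    haveI : FiniteDimensionalOrder (Set.Iic T) :=
      my_fdo (lt_of_le_of_lt
        (Order.krullDim_le_of_strictMono Subtype.val (fun _ _ h => h)) hfd')
    apply le_antisymm
    · set r := LTSeries.longestOf (Set.Iic T) with hrdef
      have hmin0 : IsMin (r.head : IrreducibleCloseds X) := my_isMin_Iic my_longest_head_isMin
      have h1 : Order.krullDim (Set.Iic T) ≤
          Order.krullDim (Set.Icc (r.head : IrreducibleCloseds X) T) := by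
        rw [Order.krullDim_eq_length_of_finiteDimensionalOrder (α := Set.Iic T)]
        exact my_le_krullDim_of_mem _ (r.map Subtype.val (fun _ _ h => h))
          (fun i => ⟨r.monotone (Fin.zero_le i), (r.toFun i).2⟩)
      rwa [hcompeqcodim T hT (r.head : IrreducibleCloseds X) Y hmin0 hY r.head.2 hYT] at h1
    · exact Order.krullDim_le_of_strictMono (fun z => ⟨z.1, z.2.2⟩) (fun _ _ h => h)
  intro p hp
  set q := LTSeries.longestOf (IrreducibleCloseds X) with hq
  have hqc : IsMaximalChain q :=
    ⟨my_longest_head_isMin, my_longest_last_isMax, fun i => my_longest_covBy i⟩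
  calc (p.length : WithBot ℕ∞)
      = Order.krullDim (Set.Icc p.head p.last) := keyA p hp
    _ = Order.krullDim (Set.Iic p.last) :=
        (keyB p.last hp.2.1 p.head hp.1 p.head_le_last).symm
    _ = Order.krullDim (Set.Iic q.last) := hequidim p.last q.last hp.2.1 hqc.2.1
    _ = Order.krullDim (Set.Icc q.head q.last) := keyB q.last hqc.2.1 q.head hqc.1 q.head_le_last
    _ = (q.length : WithBot ℕ∞) := (keyA q hqc).symm
    _ = topologicalKrullDim X :=
        (Order.krullDim_eq_length_of_finiteDimensionalOrder (α := IrreducibleCloseds X)).symm
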